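/- Let g : (0,∞) → [0,∞) be a measurable function, 0 < α ≤ 1, and write G(t) = (1/t)∫₀ᵗ g*(s)^α ds where g* is the decreasing rearrangement of g with respect to Lebesgue measure. Then for all 0 < t, G(t) − G(2t) ≤ G(2t) − g*(2t)^α. -/
import Mathlib


open MeasureTheory Set Real

/-- The decreasing rearrangement with respect to Lebesgue measure on `(0,∞)`. -/
noncomputable def rearr (g : ℝ → ℝ) (t : ℝ) : ℝ :=
  sInf {s : ℝ | 0 ≤ s ∧
    (volume.restrict (Set.Ioi (0:ℝ))) {x | s < |g x|} ≤ ENNReal.ofReal t}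

lemma rearr_nonneg (g : ℝ → ℝ) (t : ℝ) : 0 ≤ rearr g t :=
  Real.sInf_nonneg (fun _ hx => hx.1)

/-- On positive arguments, `rearr g` is antitone. -/
lemma rearr_antitone (g : ℝ → ℝ) (hg : Measurable g) {a b : ℝ} (ha : 0 < a) (hab : a ≤ b) :
    rearr g b ≤ rearr g a := by
  set μ := volume.restrict (Set.Ioi (0:ℝ)) with hμ
  set Sa := {s : ℝ | 0 ≤ s ∧ μ {x | s < |g x|} ≤ ENNReal.ofReal a} with hSa
  set Sb := {s : ℝ | 0 ≤ s ∧ μ {x | s < |g x|} ≤ ENNReal.ofReal b} with hSb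
  have hsub : Sa ⊆ Sb := fun s hs =>
    ⟨hs.1, hs.2.trans (ENNReal.ofReal_le_ofReal hab)⟩
  by_cases hb : Sb.Nonempty
  · -- Show Sa is nonempty
    obtain ⟨s₀, hs₀0, hs₀⟩ := hb
    have hne : Sa.Nonempty := by
      -- measures of {|g| > s₀ + n} tend to measure of empty intersection
      set A : ℕ → Set ℝ := fun n => {x | s₀ + n < |g x|} with hA
      have hmeas : ∀ n, NullMeasurableSet (A n) μ := fun n =>
        ((measurableSet_lt measurable_const hg.abs)).nullMeasurableSet
      have hanti : Antitone A := fun m n hmn x hx => by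
        simp only [A, Set.mem_setOf_eq] at hx ⊢
        have : (m:ℝ) ≤ n := by exact_mod_cast hmn
        linarith
      have hfin : ∃ n, μ (A n) ≠ ⊤ := by
        refine ⟨0, ?_⟩
        have : A 0 ⊆ {x | s₀ < |g x|} := fun x hx => by
          simp only [A, Set.mem_setOf_eq] at hx ⊢; linarith
        exact ((measure_mono this).trans hs₀).trans_lt ENNReal.ofReal_lt_top |>.ne
      have hempty : (⋂ n, A n) = ∅ := by
        ext x
        simp only [Set.mem_iInter, Set.mem_setOf_eq, Set.mem_empty_iff_false, iff_false,
          not_forall, not_lt, A]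
        obtain ⟨n, hn⟩ := exists_nat_ge (|g x| - s₀)
        exact ⟨n, by linarith⟩
      have htend : Filter.Tendsto (fun n => μ (A n)) Filter.atTop (nhds 0) := by
        have := tendsto_measure_iInter_atTop (μ := μ) hmeas hanti hfin
        rwa [hempty, measure_empty] at this
      have ha' : (0:ENNReal) < ENNReal.ofReal a := ENNReal.ofReal_pos.mpr ha
      obtain ⟨n, hn⟩ := (htend.eventually_le_const ha').exists
      exact ⟨s₀ + n, by positivity, hn⟩
    show sInf Sb ≤ sInf Sa
    exact csInf_le_csInf ⟨0, fun s hs => hs.1⟩ hne hsub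
  · -- Sb empty, so Sa empty, both sInf are 0
    have ha' : Sa = ∅ := Set.eq_empty_of_subset_empty
      (hsub.trans (Set.not_nonempty_iff_eq_empty.mp hb).subset)
    show sInf Sb ≤ sInf Sa
    rw [ha', Set.not_nonempty_iff_eq_empty.mp hb]

/-- with `G(t) = (1/t)∫₀ᵗ g*(s)^α ds`, one has
`G(t) − G(2t) ≤ G(2t) − g*(2t)^α` for all `t > 0`. -/
theorem hardy_average_difference_le (g : ℝ → ℝ) (hg : Measurable g)
    (hnn : ∀ s, 0 ≤ g s)
    (α : ℝ) (hα0 : 0 < α) (hα1 : α ≤ 1)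
    (hint : ∀ t > (0:ℝ), IntervalIntegrable (fun s => rearr g s ^ α) volume 0 t)
    (t : ℝ) (ht : 0 < t) :
    ((1 / t) * ∫ s in (0:ℝ)..t, rearr g s ^ α) -
        ((1 / (2 * t)) * ∫ s in (0:ℝ)..(2 * t), rearr g s ^ α) ≤
      ((1 / (2 * t)) * ∫ s in (0:ℝ)..(2 * t), rearr g s ^ α) -
        rearr g (2 * t) ^ α := by
  have h2t : (0:ℝ) < 2 * t := by linarith
  set c : ℝ := rearr g (2 * t) ^ α with hc
  have hint2 : IntervalIntegrable (fun s => rearr g s ^ α) volume 0 (2 * t) := hint _ h2t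
  have hintm : IntervalIntegrable (fun s => rearr g s ^ α) volume t (2 * t) := by
    apply hint2.mono_set
    rw [Set.uIcc_of_le (by linarith), Set.uIcc_of_le (by linarith)]
    exact Set.Icc_subset_Icc (by linarith) le_rfl
  have hsplit : (∫ s in (0:ℝ)..t, rearr g s ^ α) + (∫ s in t..(2*t), rearr g s ^ α)
      = ∫ s in (0:ℝ)..(2*t), rearr g s ^ α :=
    intervalIntegral.integral_add_adjacent_intervals (hint _ ht) hintm
  have hlow : t * c ≤ ∫ s in t..(2*t), rearr g s ^ α := by
    have : (∫ s in t..(2*t), c) ≤ ∫ s in t..(2*t), rearr g s ^ α := by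
      apply intervalIntegral.integral_mono_on (by linarith) (by simp) hintm
      intro x hx
      have h1 : rearr g (2*t) ≤ rearr g x := rearr_antitone g hg (lt_of_lt_of_le ht hx.1) hx.2
      exact Real.rpow_le_rpow (rearr_nonneg g _) h1 hα0.le
    rw [intervalIntegral.integral_const, smul_eq_mul] at this
    have he : (2*t - t) * c = t * c := by ring
    linarith
  have key : (∫ s in (0:ℝ)..t, rearr g s ^ α) + t * c ≤ ∫ s in (0:ℝ)..(2*t), rearr g s ^ α := by
    rw [← hsplit]; linarith
  have ht' : t ≠ 0 := ht.ne'
  have hu : (0:ℝ) < 1/t := by positivity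
  have hut : (1/t) * (t * c) = c := by field_simp
  have k2 : (1/t) * (∫ s in (0:ℝ)..t, rearr g s ^ α) + c
      ≤ (1/t) * (∫ s in (0:ℝ)..(2*t), rearr g s ^ α) := by
    have h := mul_le_mul_of_nonneg_left key hu.le
    rw [mul_add, hut] at h
    exact h
  have hv : 1/(2*t) = (1/t)/2 := by rw [div_div, mul_comm]
  rw [hv]
  linarith
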